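/- Let A and B be nondeterministic Büchi automata over a finite alphabet Σ, viewed as finite LTSs with a predicate 'final', with B deterministic and complete, and let L_{A,B} be their disjoint union with initial states s_A and s_B. With ⟨synch⟩φ := ⋁_{a∈Σ} ⟨a⟩_x ⟨a⟩_y φ, consider φ_incl := ⟨synch⟩* νZ₁.( final(x) ∧ ¬final(y) ∧ μZ₂. ⟨synch⟩( Z₁ ∨ (¬final(y) ∧ Z₂) ) ). Then L(A) ⊆ L(B) if and only if L_{A,B}, v ⊭ φ_incl, where v(x)=s_A and v(y)=s_B. -/

import Mathlib

/-- A labeled transition system over edge labels `Λ` and atomic propositions `P`. -/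
structure LTS (Λ P : Type) where
  S : Type
  s0 : S
  Tr : S → Λ → S → Prop
  rho : S → Set P

/-- Formulas of the higher-dimensional modal μ-calculus Lμω. -/
inductive Formula (Λ P V V2 : Type) : Type
  | prop : P → V → Formula Λ P V V2
  | svar : V2 → Formula Λ P V V2
  | neg : Formula Λ P V V2 → Formula Λ P V V2
  | and : Formula Λ P V V2 → Formula Λ P V V2 → Formula Λ P V V2
  | dia : Λ → V → Formula Λ P V V2 → Formula Λ P V V2
  | mu : V2 → Formula Λ P V V2 → Formula Λ P V V2
  | repl : (V → V) → Formula Λ P V V2 → Formula Λ P V V2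

variable {Λ P V V2 : Type}

/-- Semantics of Lμω : a set of first-order valuations. -/
def sem [DecidableEq V] [DecidableEq V2] (L : LTS Λ P) :
    Formula Λ P V V2 → (V2 → Set (V → L.S)) → Set (V → L.S)
  | .prop p x, _ => {v | p ∈ L.rho (v x)}
  | .svar X, 𝒱 => 𝒱 X
  | .neg φ, 𝒱 => (sem L φ 𝒱)ᶜ
  | .and φ ψ, 𝒱 => sem L φ 𝒱 ∩ sem L ψ 𝒱
  | .dia a x φ, 𝒱 => {v | ∃ s, L.Tr (v x) a s ∧ Function.update v x s ∈ sem L φ 𝒱}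
  | .mu X φ, 𝒱 => ⋂₀ {Q | sem L φ (Function.update 𝒱 X Q) ⊆ Q}
  | .repl κ φ, 𝒱 => {v | (fun z => v (κ z)) ∈ sem L φ 𝒱}

/-- Derived operator: disjunction. -/
def Formula.or (φ ψ : Formula Λ P V V2) : Formula Λ P V V2 := .neg (.and (.neg φ) (.neg ψ))

/-- Derived operator: box modality. -/
def Formula.box (a : Λ) (x : V) (φ : Formula Λ P V V2) : Formula Λ P V V2 :=
  .neg (.dia a x (.neg φ))

/-- Replace every occurrence of the second-order variable `X` by `¬X`. -/
def Formula.substNeg [DecidableEq V2] (X : V2) : Formula Λ P V V2 → Formula Λ P V V2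
  | .prop p x => .prop p x
  | .svar Y => if Y = X then .neg (.svar Y) else .svar Y
  | .neg φ => .neg (φ.substNeg X)
  | .and φ ψ => .and (φ.substNeg X) (ψ.substNeg X)
  | .dia a x φ => .dia a x (φ.substNeg X)
  | .mu Y φ => .mu Y (φ.substNeg X)
  | .repl κ φ => .repl κ (φ.substNeg X)

/-- Derived operator: greatest fixed point, `νX.φ := ¬μX.¬φ[X:=¬X]`. -/
def Formula.nu [DecidableEq V2] (X : V2) (φ : Formula Λ P V V2) : Formula Λ P V V2 :=
  .neg (.mu X (.neg (φ.substNeg X)))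

/-- Falsity, definable as `μX.X`. -/
def Formula.bot (X : V2) : Formula Λ P V V2 := .mu X (.svar X)

/-- Truth. -/
def Formula.top (X : V2) : Formula Λ P V V2 := .neg (.bot X)

/-- Finite conjunction (`X` is a dummy second-order variable for the empty case). -/
def bigAnd (X : V2) (l : List (Formula Λ P V V2)) : Formula Λ P V V2 := l.foldr .and (.top X)

/-- Finite disjunction. -/
def bigOr (X : V2) (l : List (Formula Λ P V V2)) : Formula Λ P V V2 := l.foldr .or (.bot X)

/-- Derived operator: implication. -/
def Formula.imp (φ ψ : Formula Λ P V V2) : Formula Λ P V V2 := .neg (.and φ (.neg ψ))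

/-- Derived operator: bi-implication. -/
def Formula.iff (φ ψ : Formula Λ P V V2) : Formula Λ P V V2 := .and (φ.imp ψ) (ψ.imp φ)

/-- A run of the automaton (viewed as an LTS) on the infinite word `w`. -/
def IsRun {Alph P : Type} (A : LTS Alph P) (w : ℕ → Alph) (r : ℕ → A.S) : Prop :=
  r 0 = A.s0 ∧ ∀ i, A.Tr (r i) (w i) (r (i + 1))

/-- Determinism of an automaton. -/
def Deterministic {Alph P : Type} (A : LTS Alph P) : Prop :=
  ∀ s a t₁ t₂, A.Tr s a t₁ → A.Tr s a t₂ → t₁ = t₂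

/-- Completeness of an automaton. -/
def Complete {Alph P : Type} (A : LTS Alph P) : Prop :=
  ∀ s a, ∃ t, A.Tr s a t

/-- The disjoint union of two LTSs (with the initial state of the first one). -/
def dunion {Alph P : Type} (A B : LTS Alph P) : LTS Alph P where
  S := A.S ⊕ B.S
  s0 := .inl A.s0
  Tr := fun s a t =>
    match s, t with
    | .inl s, .inl t => A.Tr s a t
    | .inr s, .inr t => B.Tr s a t
    | _, _ => False
  rho := fun s => match s with | .inl s => A.rho s | .inr s => B.rho s

/-- `⟨synch⟩φ := ⋁_{a∈Σ} ⟨a⟩_x ⟨a⟩_y φ`, with `x`, `y` being the variables `0`, `1`. -/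
noncomputable def synch {Alph P : Type} [Fintype Alph] (φ : Formula Alph P (Fin 2) ℕ) :
    Formula Alph P (Fin 2) ℕ :=
  bigOr 9 ((Finset.univ : Finset Alph).toList.map fun a => .dia a 0 (.dia a 1 φ))

/-- The language of a nondeterministic Büchi automaton, viewed as a finite LTS whose
single atomic proposition is the predicate `final`. -/
def BuchiLang {Alph : Type} (A : LTS Alph Unit) : Set (ℕ → Alph) :=
  {w | ∃ r, IsRun A w r ∧ ∀ N, ∃ i, N ≤ i ∧ () ∈ A.rho (r i)}

/-- `final(x)` for a first-order variable `x`. -/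
def finalF {Alph : Type} (x : Fin 2) : Formula Alph Unit (Fin 2) ℕ := .prop () x

/-- The formula
`φ_incl = ⟨synch⟩* νZ₁.( final(x) ∧ ¬final(y) ∧ μZ₂.⟨synch⟩( Z₁ ∨ (¬final(y) ∧ Z₂) ) )`
where `⟨synch⟩*ψ := μZ. ψ ∨ ⟨synch⟩Z`; here `Z₁ = 0`, `Z₂ = 1`, `Z = 2`. -/
noncomputable def phiIncl (Alph : Type) [Fintype Alph] : Formula Alph Unit (Fin 2) ℕ :=
  .mu 2 (.or
    (Formula.nu 0 (.and (finalF 0) (.and (.neg (finalF 1))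
      (.mu 1 (synch (.or (.svar 0) (.and (.neg (finalF 1)) (.svar 1))))))))
    (synch (.svar 2)))


/-! ### Auxiliary development -/

section AuxSem

open Classical

lemma fin2_eq {α : Type} {f g : Fin 2 → α} (h0 : f 0 = g 0) (h1 : f 1 = g 1) : f = g := by
  funext i; fin_cases i <;> assumption

variable [DecidableEq V] [DecidableEq V2]

lemma mem_sem_or (L : LTS Λ P) (φ ψ : Formula Λ P V V2) (𝒱 : V2 → Set (V → L.S))
    (v : V → L.S) :
    v ∈ sem L (Formula.or φ ψ) 𝒱 ↔ v ∈ sem L φ 𝒱 ∨ v ∈ sem L ψ 𝒱 := by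
  simp only [Formula.or, sem, Set.mem_compl_iff, Set.mem_inter_iff]
  tauto

lemma sem_bot (L : LTS Λ P) (X : V2) (𝒱 : V2 → Set (V → L.S)) :
    sem L (Formula.bot (V := V) (Λ := Λ) (P := P) X) 𝒱 = ∅ := by
  ext v
  simp only [Formula.bot, sem, Set.mem_sInter, Set.mem_setOf_eq, Set.mem_empty_iff_false,
    iff_false]
  intro h
  have := h ∅ (by simp [Function.update_self])
  exact this

lemma mem_sem_bigOr (L : LTS Λ P) (X : V2) (l : List (Formula Λ P V V2))
    (𝒱 : V2 → Set (V → L.S)) (v : V → L.S) :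
    v ∈ sem L (bigOr X l) 𝒱 ↔ ∃ φ ∈ l, v ∈ sem L φ 𝒱 := by
  induction l with
  | nil => simp [bigOr, sem_bot]
  | cons a l ih =>
    simp only [bigOr, List.foldr_cons] at *
    rw [mem_sem_or, ih]
    simp

/-- `X` is not bound by any `μ` in the formula. -/
def Avoids (X : V2) : Formula Λ P V V2 → Prop
  | .prop _ _ => True
  | .svar _ => True
  | .neg φ => Avoids X φ
  | .and φ ψ => Avoids X φ ∧ Avoids X ψ
  | .dia _ _ φ => Avoids X φ
  | .mu Y φ => Y ≠ X ∧ Avoids X φ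
  | .repl _ φ => Avoids X φ

lemma sem_substNeg (L : LTS Λ P) (X : V2) (φ : Formula Λ P V V2) (h : Avoids X φ)
    (𝒱 : V2 → Set (V → L.S)) :
    sem L (φ.substNeg X) 𝒱 = sem L φ (Function.update 𝒱 X (𝒱 X)ᶜ) := by
  induction φ generalizing 𝒱 with
  | prop p x => rfl
  | svar Y =>
    by_cases hYX : Y = X
    · subst hYX
      simp [Formula.substNeg, sem, Function.update_self]
    · simp [Formula.substNeg, sem, hYX, Function.update_of_ne hYX]
  | neg φ ih => simp only [Formula.substNeg, sem, ih h]
  | and φ ψ ih1 ih2 => simp only [Formula.substNeg, sem, ih1 h.1, ih2 h.2]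
  | dia a x φ ih => simp only [Formula.substNeg, sem, ih h]
  | mu Y φ ih =>
    obtain ⟨hYX, hφ⟩ := h
    simp only [Formula.substNeg, sem]
    have hset : {Q | sem L (Formula.substNeg X φ) (Function.update 𝒱 Y Q) ⊆ Q} =
        {Q | sem L φ (Function.update (Function.update 𝒱 X (𝒱 X)ᶜ) Y Q) ⊆ Q} := by
      ext Q
      simp only [Set.mem_setOf_eq]
      rw [ih hφ, Function.update_of_ne (Ne.symm hYX), Function.update_comm hYX]
    rw [hset]
  | repl κ φ ih => simp only [Formula.substNeg, sem, ih h]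

lemma mem_sem_nu (L : LTS Λ P) (X : V2) (φ : Formula Λ P V V2) (h : Avoids X φ)
    (𝒱 : V2 → Set (V → L.S)) (v : V → L.S) :
    v ∈ sem L (Formula.nu X φ) 𝒱 ↔
      ∃ Q, Q ⊆ sem L φ (Function.update 𝒱 X Q) ∧ v ∈ Q := by
  have key : ∀ Q : Set (V → L.S),
      sem L (φ.substNeg X) (Function.update 𝒱 X Q) =
        sem L φ (Function.update 𝒱 X Qᶜ) := by
    intro Q
    simp only [sem_substNeg L X φ h, Function.update_self, Function.update_idem]
  simp only [Formula.nu, sem, Set.mem_compl_iff, Set.mem_sInter, Set.mem_setOf_eq]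
  push_neg
  constructor
  · rintro ⟨Q, hQ, hv⟩
    rw [key] at hQ
    exact ⟨Qᶜ, fun u hu => by
      by_contra hcon
      exact hu (hQ hcon), hv⟩
  · rintro ⟨R, hR, hv⟩
    refine ⟨Rᶜ, ?_, by simpa using hv⟩
    rw [key, compl_compl]
    intro u hu
    simp only [Set.mem_compl_iff] at hu ⊢
    exact fun hc => hu (hR hc)

end AuxSem


section AuxSynch

open Classical

variable {Alph : Type}

/-- Synchronized step between two tracked states. -/
def StepS (L : LTS Alph Unit) (v v' : Fin 2 → L.S) : Prop :=
  ∃ a, L.Tr (v 0) a (v' 0) ∧ L.Tr (v 1) a (v' 1)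

def finx (L : LTS Alph Unit) (v : Fin 2 → L.S) : Prop := () ∈ L.rho (v 0)

def finy (L : LTS Alph Unit) (v : Fin 2 → L.S) : Prop := () ∈ L.rho (v 1)

variable [Fintype Alph]

lemma mem_sem_synch (L : LTS Alph Unit) (φ : Formula Alph Unit (Fin 2) ℕ)
    (𝒱 : ℕ → Set (Fin 2 → L.S)) (v : Fin 2 → L.S) :
    v ∈ sem L (synch φ) 𝒱 ↔ ∃ v', StepS L v v' ∧ v' ∈ sem L φ 𝒱 := by
  rw [synch, mem_sem_bigOr]
  constructor
  · rintro ⟨ψ, hψ, hv⟩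
    simp only [List.mem_map] at hψ
    obtain ⟨a, -, rfl⟩ := hψ
    simp only [sem, Set.mem_setOf_eq] at hv
    obtain ⟨s, hs, t, ht, hmem⟩ := hv
    refine ⟨Function.update (Function.update v 0 s) 1 t, ⟨a, ?_, ?_⟩, hmem⟩
    · simpa using hs
    · simpa using ht
  · rintro ⟨v', ⟨a, h0, h1⟩, hv'⟩
    refine ⟨_, List.mem_map_of_mem (Finset.mem_toList.2 (Finset.mem_univ a)), ?_⟩
    simp only [sem, Set.mem_setOf_eq]
    refine ⟨v' 0, h0, v' 1, by simpa using h1, ?_⟩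
    rwa [show Function.update (Function.update v 0 (v' 0)) 1 (v' 1) = v' from
      fin2_eq (by simp) (by simp)]

lemma avoids_or {X : V2} {φ ψ : Formula Λ P V V2} :
    Avoids X (Formula.or φ ψ) ↔ Avoids X φ ∧ Avoids X ψ := Iff.rfl

lemma mem_sem_and {V V2 : Type} [DecidableEq V] [DecidableEq V2] {L : LTS Λ P}
    {φ ψ : Formula Λ P V V2} {𝒱 : V2 → Set (V → L.S)} {v : V → L.S} :
    v ∈ sem L (Formula.and φ ψ) 𝒱 ↔ v ∈ sem L φ 𝒱 ∧ v ∈ sem L ψ 𝒱 := Iff.rfl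

lemma mem_sem_neg {V V2 : Type} [DecidableEq V] [DecidableEq V2] {L : LTS Λ P}
    {φ : Formula Λ P V V2} {𝒱 : V2 → Set (V → L.S)} {v : V → L.S} :
    v ∈ sem L (Formula.neg φ) 𝒱 ↔ v ∉ sem L φ 𝒱 := Iff.rfl

lemma avoids_synch (X : ℕ) (hX : X ≠ 9) (φ : Formula Alph Unit (Fin 2) ℕ)
    (h : Avoids X φ) : Avoids X (synch φ) := by
  rw [synch]
  generalize (Finset.univ : Finset Alph).toList = l
  induction l with
  | nil => exact show (9 : ℕ) ≠ X ∧ True from ⟨Ne.symm hX, trivial⟩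
  | cons a l ih => exact avoids_or.mpr ⟨h, ih⟩

/-- Finite reachability of `Q` through at least one synchronized step, with
`¬ final(y)` at all intermediate points. -/
inductive InnerReach (L : LTS Alph Unit) (Q : Set (Fin 2 → L.S)) : (Fin 2 → L.S) → Prop
  | base {v v'} : StepS L v v' → v' ∈ Q → InnerReach L Q v
  | step {v v'} : StepS L v v' → ¬ finy L v' → InnerReach L Q v' → InnerReach L Q v

/-- Finite reachability of `G` by synchronized steps. -/
inductive ReachS (L : LTS Alph Unit) (G : Set (Fin 2 → L.S)) : (Fin 2 → L.S) → Prop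
  | refl {v} : v ∈ G → ReachS L G v
  | step {v v'} : StepS L v v' → ReachS L G v' → ReachS L G v

noncomputable def innerφ (Alph : Type) [Fintype Alph] : Formula Alph Unit (Fin 2) ℕ :=
  .mu 1 (synch (.or (.svar 0) (.and (.neg (finalF 1)) (.svar 1))))

noncomputable def goodφ (Alph : Type) [Fintype Alph] : Formula Alph Unit (Fin 2) ℕ :=
  Formula.nu 0 (.and (finalF 0) (.and (.neg (finalF 1)) (innerφ Alph)))

lemma phiIncl_eq : phiIncl Alph = .mu 2 (.or (goodφ Alph) (synch (.svar 2))) := rfl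

lemma mem_sem_inner (L : LTS Alph Unit) (𝒱 : ℕ → Set (Fin 2 → L.S)) (v : Fin 2 → L.S) :
    v ∈ sem L (innerφ Alph) 𝒱 ↔ InnerReach L (𝒱 0) v := by
  constructor
  · intro hv
    have := hv {u | InnerReach L (𝒱 0) u} ?_
    · exact this
    · intro u hu
      rw [mem_sem_synch] at hu
      obtain ⟨u', hstep, hu'⟩ := hu
      rw [mem_sem_or] at hu'
      rcases hu' with h | h
      · exact InnerReach.base hstep (by
          simpa [sem, Function.update_of_ne] using h)
      · simp only [sem, Set.mem_inter_iff, Set.mem_compl_iff, Set.mem_setOf_eq,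
          Function.update_self] at h
        exact InnerReach.step hstep h.1 h.2
  · intro hv
    induction hv with
    | base hstep hQ =>
      intro Q hQ'
      apply hQ'
      rw [mem_sem_synch]
      exact ⟨_, hstep, by rw [mem_sem_or]; exact Or.inl (by
        simpa [sem, Function.update_of_ne] using hQ)⟩
    | step hstep hfy _ ih =>
      intro Q hQ'
      apply hQ'
      rw [mem_sem_synch]
      refine ⟨_, hstep, ?_⟩
      rw [mem_sem_or]
      refine Or.inr ?_
      simp only [sem, Set.mem_inter_iff, Set.mem_compl_iff, Set.mem_setOf_eq,
        Function.update_self]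
      exact ⟨hfy, ih Q hQ'⟩

/-- Semantic counterpart of the `ν`-subformula. -/
def GoodP (L : LTS Alph Unit) (v : Fin 2 → L.S) : Prop :=
  ∃ Q : Set (Fin 2 → L.S),
    (∀ u ∈ Q, finx L u ∧ ¬ finy L u ∧ InnerReach L Q u) ∧ v ∈ Q

lemma avoids_good_body :
    Avoids 0 (Formula.and (finalF 0) (.and (.neg (finalF (Alph := Alph) 1)) (innerφ Alph))) := by
  refine ⟨trivial, trivial, by norm_num, ?_⟩
  exact avoids_synch 0 (by norm_num) _ (avoids_or.mpr ⟨trivial, trivial, trivial⟩)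

lemma mem_sem_good (L : LTS Alph Unit) (𝒱 : ℕ → Set (Fin 2 → L.S)) (v : Fin 2 → L.S) :
    v ∈ sem L (goodφ Alph) 𝒱 ↔ GoodP L v := by
  rw [goodφ, mem_sem_nu _ _ _ avoids_good_body]
  unfold GoodP
  apply exists_congr
  intro Q
  constructor
  · rintro ⟨hQ, hv⟩
    refine ⟨fun u hu => ?_, hv⟩
    have h := hQ hu
    rw [mem_sem_and, mem_sem_and, mem_sem_inner, Function.update_self] at h
    exact ⟨h.1, h.2.1, h.2.2⟩
  · rintro ⟨hQ, hv⟩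
    refine ⟨fun u hu => ?_, hv⟩
    obtain ⟨h1, h2, h3⟩ := hQ u hu
    rw [mem_sem_and, mem_sem_and, mem_sem_inner, Function.update_self]
    exact ⟨h1, h2, h3⟩

lemma mem_sem_phiIncl (L : LTS Alph Unit) (𝒱 : ℕ → Set (Fin 2 → L.S)) (v : Fin 2 → L.S) :
    v ∈ sem L (phiIncl Alph) 𝒱 ↔ ReachS L {u | GoodP L u} v := by
  rw [phiIncl_eq]
  constructor
  · intro hv
    have := hv {u | ReachS L {u | GoodP L u} u} ?_
    · exact this
    · intro u hu
      rw [mem_sem_or] at hu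
      rcases hu with h | h
      · exact ReachS.refl (by rw [mem_sem_good] at h; exact h)
      · rw [mem_sem_synch] at h
        obtain ⟨u', hstep, hu'⟩ := h
        simp only [sem, Function.update_self, Set.mem_setOf_eq] at hu'
        exact ReachS.step hstep hu'
  · intro hv
    induction hv with
    | refl hG =>
      intro Q hQ
      apply hQ
      rw [mem_sem_or]
      exact Or.inl (by rw [mem_sem_good]; exact hG)
    | step hstep _ ih =>
      intro Q hQ
      apply hQ
      rw [mem_sem_or]
      refine Or.inr ?_
      rw [mem_sem_synch]
      refine ⟨_, hstep, ?_⟩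
      simp only [sem, Function.update_self, Set.mem_setOf_eq]
      exact ih Q hQ

end AuxSynch


section AuxSeq

open Classical

variable {Alph : Type} [Fintype Alph]

lemma innerReach_path {L : LTS Alph Unit} {Q : Set (Fin 2 → L.S)} {u : Fin 2 → L.S}
    (h : InnerReach L Q u) :
    ∃ (n : ℕ) (p : ℕ → (Fin 2 → L.S)), 1 ≤ n ∧ p 0 = u ∧ p n ∈ Q ∧
      (∀ i < n, StepS L (p i) (p (i+1))) ∧ (∀ i, 0 < i → i < n → ¬ finy L (p i)) := by
  induction h with
  | @base v v' hst hQ =>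
    refine ⟨1, fun i => if i = 0 then v else v', le_refl 1, by simp, by simp [hQ], ?_, ?_⟩
    · intro i hi
      have : i = 0 := by omega
      subst this
      simpa using hst
    · intro i h0 h1; omega
  | @step v v' hst hfy _ ih =>
    obtain ⟨n, p, hn, hp0, hpn, hps, hpf⟩ := ih
    refine ⟨n + 1, fun i => if i = 0 then v else p (i - 1), by omega, by simp, ?_, ?_, ?_⟩
    · simpa using hpn
    · intro i hi
      by_cases h0 : i = 0
      · subst h0
        simpa [hp0] using hst
      · have h1 : i - 1 < n := by omega
        have := hps (i - 1) h1
        have e1 : i - 1 + 1 = i := by omega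
        rw [e1] at this
        simpa [h0] using this
    · intro i h0 h1
      have h0' : i ≠ 0 := by omega
      simp only [h0', if_false]
      by_cases hi1 : i = 1
      · subst hi1
        simpa [hp0] using hfy
      · exact hpf (i - 1) (by omega) (by omega)

lemma flatten {L : LTS Alph Unit} (Q : Set (Fin 2 → L.S))
    (np : (Fin 2 → L.S) → ℕ) (pp : (Fin 2 → L.S) → ℕ → (Fin 2 → L.S))
    (hpp : ∀ u ∈ Q, 1 ≤ np u ∧ pp u 0 = u ∧ pp u (np u) ∈ Q ∧
      (∀ i < np u, StepS L (pp u i) (pp u (i+1))) ∧ (∀ i < np u, ¬ finy L (pp u i)))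
    (hQfx : ∀ u ∈ Q, finx L u) (v : Fin 2 → L.S) (hv : v ∈ Q) :
    ∃ u : ℕ → (Fin 2 → L.S), u 0 = v ∧ (∀ k, StepS L (u k) (u (k+1))) ∧
      (∀ k, ¬ finy L (u k)) ∧ ∀ N, ∃ k, N ≤ k ∧ finx L (u k) := by
  classical
  set f : ((ℕ → (Fin 2 → L.S)) × ℕ × ℕ) → ((ℕ → (Fin 2 → L.S)) × ℕ × ℕ) :=
    fun s => if s.2.2 + 1 < s.2.1 then (s.1, s.2.1, s.2.2 + 1)
      else (pp (s.1 s.2.1), np (s.1 s.2.1), 0) with hf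
  set st : ℕ → ((ℕ → (Fin 2 → L.S)) × ℕ × ℕ) := fun k => f^[k] (pp v, np v, 0) with hstdef
  have hst_succ : ∀ k, st (k + 1) = f (st k) := by
    intro k
    simp only [hstdef]
    exact Function.iterate_succ_apply' f k _
  set Inv : ((ℕ → (Fin 2 → L.S)) × ℕ × ℕ) → Prop :=
    fun s => s.2.2 < s.2.1 ∧ s.1 0 ∈ Q ∧ s.1 s.2.1 ∈ Q ∧
      (∀ i < s.2.1, StepS L (s.1 i) (s.1 (i+1))) ∧ (∀ i < s.2.1, ¬ finy L (s.1 i)) with hInvDef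
  have hInvStep : ∀ s, Inv s → Inv (f s) := by
    rintro s ⟨h1, h2, h3, h4, h5⟩
    by_cases hc : s.2.2 + 1 < s.2.1
    · simp only [hf, if_pos hc]
      exact ⟨hc, h2, h3, h4, h5⟩
    · simp only [hf, if_neg hc]
      obtain ⟨g1, g2, g3, g4, g5⟩ := hpp _ h3
      exact ⟨g1, by show pp (s.1 s.2.1) 0 ∈ Q; rw [g2]; exact h3, g3, g4, g5⟩
  have hInv : ∀ k, Inv (st k) := by
    intro k
    induction k with
    | zero =>
      obtain ⟨g1, g2, g3, g4, g5⟩ := hpp v hv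
      exact ⟨g1, by show pp v 0 ∈ Q; rw [g2]; exact hv, g3, g4, g5⟩
    | succ k ih =>
      rw [hst_succ]
      exact hInvStep _ ih
  refine ⟨fun k => (st k).1 (st k).2.2, ?_, ?_, ?_, ?_⟩
  · show (pp v) 0 = v
    exact (hpp v hv).2.1
  · -- synchronized steps
    intro k
    obtain ⟨h1, h2, h3, h4, h5⟩ := hInv k
    show StepS L ((st k).1 (st k).2.2) ((st (k + 1)).1 (st (k + 1)).2.2)
    rw [hst_succ]
    by_cases hc : (st k).2.2 + 1 < (st k).2.1
    · simp only [hf, if_pos hc]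
      exact h4 _ h1
    · simp only [hf, if_neg hc]
      have he : (st k).2.2 + 1 = (st k).2.1 := by omega
      obtain ⟨g1, g2, g3, g4, g5⟩ := hpp _ h3
      show StepS L ((st k).1 (st k).2.2) (pp ((st k).1 (st k).2.1) 0)
      rw [g2, ← he]
      exact h4 _ h1
  · -- never final on the second component
    intro k
    obtain ⟨h1, h2, h3, h4, h5⟩ := hInv k
    exact h5 _ h1
  · -- infinitely often final on the first component
    have claim : ∀ m k, (st k).2.1 - (st k).2.2 = m → ∃ d, (st (k + d)).2.2 = 0 := by
      intro m
      induction m using Nat.strong_induction_on with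
      | _ m ih =>
        intro k hm
        by_cases h0 : (st k).2.2 = 0
        · exact ⟨0, h0⟩
        · obtain ⟨h1, h2, h3, h4, h5⟩ := hInv k
          by_cases hc : (st k).2.2 + 1 < (st k).2.1
          · have hnext : st (k + 1) = ((st k).1, (st k).2.1, (st k).2.2 + 1) := by
              rw [hst_succ]; simp only [hf, if_pos hc]
            have hlt : (st (k + 1)).2.1 - (st (k + 1)).2.2 < m := by
              rw [hnext]; simp; omega
            obtain ⟨d, hd⟩ := ih _ hlt (k + 1) rfl
            exact ⟨d + 1, by rw [show k + (d + 1) = k + 1 + d by omega]; exact hd⟩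
          · have hnext : (st (k + 1)).2.2 = 0 := by
              rw [hst_succ]; simp only [hf, if_neg hc]
            exact ⟨1, hnext⟩
    intro N
    obtain ⟨d, hd⟩ := claim _ N rfl
    refine ⟨N + d, by omega, ?_⟩
    obtain ⟨h1, h2, h3, h4, h5⟩ := hInv (N + d)
    show finx L ((st (N + d)).1 (st (N + d)).2.2)
    rw [hd]
    exact hQfx _ h2

end AuxSeq


set_option linter.unusedSectionVars false

section AuxMain

open Classical

variable {Alph : Type} [Fintype Alph]

lemma good_seq {L : LTS Alph Unit} {v : Fin 2 → L.S} (h : GoodP L v) :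
    ∃ u : ℕ → (Fin 2 → L.S), u 0 = v ∧ (∀ k, StepS L (u k) (u (k+1))) ∧
      (∀ k, ¬ finy L (u k)) ∧ ∀ N, ∃ k, N ≤ k ∧ finx L (u k) := by
  obtain ⟨Q, hQ, hv⟩ := h
  have hpath : ∀ u : Fin 2 → L.S, ∃ (n : ℕ) (p : ℕ → (Fin 2 → L.S)), u ∈ Q →
      1 ≤ n ∧ p 0 = u ∧ p n ∈ Q ∧ (∀ i < n, StepS L (p i) (p (i+1))) ∧
      (∀ i < n, ¬ finy L (p i)) := by
    intro u
    by_cases hu : u ∈ Q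
    · obtain ⟨hfx, hfy, hIR⟩ := hQ u hu
      obtain ⟨n, p, h1, h2, h3, h4, h5⟩ := innerReach_path hIR
      refine ⟨n, p, fun _ => ⟨h1, h2, h3, h4, fun i hi => ?_⟩⟩
      rcases Nat.eq_zero_or_pos i with h0 | h0
      · subst h0; rw [h2]; exact hfy
      · exact h5 i h0 hi
    · exact ⟨1, fun _ => u, fun hu' => absurd hu' hu⟩
  choose np pp hpp using hpath
  exact flatten Q np pp (fun u hu => hpp u hu) (fun u hu => (hQ u hu).1) v hv

lemma reach_good_seq {L : LTS Alph Unit} {v : Fin 2 → L.S}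
    (h : ReachS L {u | GoodP L u} v) :
    ∃ (m : ℕ) (u : ℕ → (Fin 2 → L.S)), u 0 = v ∧ (∀ k, StepS L (u k) (u (k+1))) ∧
      (∀ k, m ≤ k → ¬ finy L (u k)) ∧ ∀ N, ∃ k, N ≤ k ∧ finx L (u k) := by
  induction h with
  | refl hG =>
    obtain ⟨u, h0, h1, h2, h3⟩ := good_seq hG
    exact ⟨0, u, h0, h1, fun k _ => h2 k, h3⟩
  | @step v v' hstep _ ih =>
    obtain ⟨m, u, h0, h1, h2, h3⟩ := ih
    refine ⟨m + 1, fun k => if k = 0 then v else u (k - 1), by simp, ?_, ?_, ?_⟩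
    · intro k
      by_cases hk : k = 0
      · subst hk; simpa [h0] using hstep
      · have e : k - 1 + 1 = k := by omega
        have hs := h1 (k - 1)
        rw [e] at hs
        simpa [hk] using hs
    · intro k hk
      have hk0 : k ≠ 0 := by omega
      simp only [hk0, if_false]
      exact h2 (k - 1) (by omega)
    · intro N
      obtain ⟨k, hk, hfx⟩ := h3 N
      refine ⟨k + 1, by omega, ?_⟩
      simpa using hfx

lemma word_of_reach {A B : LTS Alph Unit} (hdet : Deterministic B)
    {v : Fin 2 → (dunion A B).S} (hvx : v 0 = .inl A.s0) (hvy : v 1 = .inr B.s0)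
    (h : ReachS (dunion A B) {u | GoodP (dunion A B) u} v) :
    ∃ w, w ∈ BuchiLang A ∧ w ∉ BuchiLang B := by
  obtain ⟨m, u, h0, h1, h2, h3⟩ := reach_good_seq h
  have h1' : ∀ k, ∃ a, (dunion A B).Tr (u k 0) a (u (k+1) 0) ∧
      (dunion A B).Tr (u k 1) a (u (k+1) 1) := h1
  choose w hw0 hw1 using h1'
  have hA : ∀ k, ∃ sa, u k 0 = Sum.inl sa := by
    intro k
    induction k with
    | zero => exact ⟨A.s0, by rw [h0]; exact hvx⟩
    | succ k ih =>
      obtain ⟨sa, hsa⟩ := ih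
      have htr := hw0 k
      rw [hsa] at htr
      cases hk : u (k+1) 0 with
      | inl t => exact ⟨t, rfl⟩
      | inr t => rw [hk] at htr; exact (show False from htr).elim
  have hB : ∀ k, ∃ sb, u k 1 = Sum.inr sb := by
    intro k
    induction k with
    | zero => exact ⟨B.s0, by rw [h0]; exact hvy⟩
    | succ k ih =>
      obtain ⟨sb, hsb⟩ := ih
      have htr := hw1 k
      rw [hsb] at htr
      cases hk : u (k+1) 1 with
      | inl t => rw [hk] at htr; exact (show False from htr).elim
      | inr t => exact ⟨t, rfl⟩
  choose rA hrA using hA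
  choose rB hrB using hB
  have hATr : ∀ k, A.Tr (rA k) (w k) (rA (k+1)) := by
    intro k
    have htr := hw0 k
    rw [hrA k, hrA (k+1)] at htr
    exact htr
  have hBTr : ∀ k, B.Tr (rB k) (w k) (rB (k+1)) := by
    intro k
    have htr := hw1 k
    rw [hrB k, hrB (k+1)] at htr
    exact htr
  have hrA0 : rA 0 = A.s0 := by
    have e := hrA 0
    rw [h0, hvx] at e
    exact (Sum.inl.inj e).symm
  have hrB0 : rB 0 = B.s0 := by
    have e := hrB 0
    rw [h0, hvy] at e
    exact (Sum.inr.inj e).symm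
  refine ⟨w, ⟨rA, ⟨hrA0, hATr⟩, ?_⟩, ?_⟩
  · intro N
    obtain ⟨k, hk, hfx⟩ := h3 N
    refine ⟨k, hk, ?_⟩
    have hfx' : () ∈ (dunion A B).rho (u k 0) := hfx
    rw [hrA k] at hfx'
    exact hfx'
  · rintro ⟨r, ⟨hr0, hrTr⟩, hinf⟩
    have heq : ∀ k, r k = rB k := by
      intro k
      induction k with
      | zero => rw [hr0, hrB0]
      | succ k ih => exact hdet _ _ _ _ (hrTr k) (by rw [ih]; exact hBTr k)
    obtain ⟨i, hi, hfin⟩ := hinf m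
    refine h2 i hi ?_
    show () ∈ (dunion A B).rho (u i 1)
    rw [hrB i]
    rw [heq i] at hfin
    exact hfin

lemma reach_of_word {A B : LTS Alph Unit} (hcomp : Complete B)
    {v : Fin 2 → (dunion A B).S} (hvx : v 0 = .inl A.s0) (hvy : v 1 = .inr B.s0)
    {w : ℕ → Alph} (hwA : w ∈ BuchiLang A) (hwB : w ∉ BuchiLang B) :
    ReachS (dunion A B) {u | GoodP (dunion A B) u} v := by
  obtain ⟨rA, ⟨hA0, hATr⟩, hAinf⟩ := hwA
  obtain ⟨rB, hB0, hBTr⟩ : ∃ r : ℕ → B.S, r 0 = B.s0 ∧ ∀ i, B.Tr (r i) (w i) (r (i+1)) := by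
    refine ⟨fun i => Nat.rec B.s0 (fun i s => Classical.choose (hcomp s (w i))) i, rfl, ?_⟩
    intro i
    exact Classical.choose_spec (hcomp _ (w i))
  obtain ⟨N, hN⟩ : ∃ N, ∀ i, N ≤ i → () ∉ B.rho (rB i) := by
    by_contra hcon
    push_neg at hcon
    exact hwB ⟨rB, ⟨hB0, hBTr⟩, hcon⟩
  set vs : ℕ → (Fin 2 → (dunion A B).S) :=
    fun i j => if j = 0 then Sum.inl (rA i) else Sum.inr (rB i) with hvs
  have hvs0 : ∀ i, vs i 0 = Sum.inl (rA i) := fun i => by simp [hvs]; rfl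
  have hvs1 : ∀ i, vs i 1 = Sum.inr (rB i) := fun i => by
    simp [hvs, show (1 : Fin 2) ≠ 0 by decide]; rfl
  have hstep : ∀ i, StepS (dunion A B) (vs i) (vs (i+1)) := by
    intro i
    refine ⟨w i, ?_, ?_⟩
    · rw [hvs0, hvs0]; exact hATr i
    · rw [hvs1, hvs1]; exact hBTr i
  have hfinyN : ∀ i, N ≤ i → ¬ finy (dunion A B) (vs i) := by
    intro i hi hcon
    have hcon' : () ∈ (dunion A B).rho (vs i 1) := hcon
    rw [hvs1] at hcon'
    exact hN i hi hcon'
  set Q : Set (Fin 2 → (dunion A B).S) :=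
    {x | ∃ i, N ≤ i ∧ () ∈ A.rho (rA i) ∧ x = vs i} with hQdef
  have key : ∀ d i, N ≤ i → () ∈ A.rho (rA (i + d + 1)) →
      InnerReach (dunion A B) Q (vs i) := by
    intro d
    induction d with
    | zero =>
      intro i hi hfin
      exact InnerReach.base (hstep i) ⟨i + 1, by omega, by simpa using hfin, rfl⟩
    | succ d ih =>
      intro i hi hfin
      refine InnerReach.step (hstep i) (hfinyN (i+1) (by omega)) (ih (i+1) (by omega) ?_)
      rw [show i + 1 + d + 1 = i + (d + 1) + 1 by omega]
      exact hfin
  have hGoodQ : ∀ x ∈ Q, finx (dunion A B) x ∧ ¬ finy (dunion A B) x ∧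
      InnerReach (dunion A B) Q x := by
    rintro x ⟨i, hi, hfin, rfl⟩
    refine ⟨?_, hfinyN i hi, ?_⟩
    · show () ∈ (dunion A B).rho (vs i 0)
      rw [hvs0]
      exact hfin
    · obtain ⟨j, hj, hjfin⟩ := hAinf (i + 1)
      have he : j = i + (j - i - 1) + 1 := by omega
      exact key (j - i - 1) i hi (by rw [← he]; exact hjfin)
  obtain ⟨m, hm, hmfin⟩ := hAinf N
  have hGood : GoodP (dunion A B) (vs m) := ⟨Q, hGoodQ, ⟨m, hm, hmfin, rfl⟩⟩
  have back : ∀ d i, GoodP (dunion A B) (vs (i + d)) →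
      ReachS (dunion A B) {x | GoodP (dunion A B) x} (vs i) := by
    intro d
    induction d with
    | zero => intro i h; exact ReachS.refl h
    | succ d ih =>
      intro i h
      refine ReachS.step (hstep i) (ih (i+1) ?_)
      rw [show i + 1 + d = i + (d + 1) by omega]
      exact h
  have hv0 : v = vs 0 := by
    refine fin2_eq ?_ ?_
    · rw [hvx, hvs0, hA0]
    · rw [hvy, hvs1, hB0]
  rw [hv0]
  exact back m 0 (by simpa using hGood)

end AuxMain

/-- for nondeterministic Büchi automata `A`, `B` over a finite alphabet,
with `B` deterministic and complete, `L(A) ⊆ L(B)` iff `φ_incl` fails in the disjoint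
union `L_{A,B}` at every valuation `v` with `v x = s_A` and `v y = s_B`. -/
theorem buchi_inclusion_iff_not_phiIncl {Alph : Type} [Fintype Alph] (A B : LTS Alph Unit)
    [Fintype A.S] [Fintype B.S] (hdet : Deterministic B) (hcomp : Complete B)
    (v : Fin 2 → (dunion A B).S) (hvx : v 0 = .inl A.s0) (hvy : v 1 = .inr B.s0) :
    BuchiLang A ⊆ BuchiLang B ↔ v ∉ sem (dunion A B) (phiIncl Alph) (fun _ => ∅) := by
  rw [mem_sem_phiIncl]
  constructor
  · intro hsub hre
    obtain ⟨w, hwA, hwB⟩ := word_of_reach hdet hvx hvy hre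
    exact hwB (hsub hwA)
  · intro hnot w hwA
    by_contra hwB
    exact hnot (reach_of_word hcomp hvx hvy hwA hwB)
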